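/- arXiv:0808.2152 — 5 statements merged into one kernel-verified Lean document; each statement's English description precedes it below -/
import Mathlib

section
/- For any integer d > 0 and any positive real x, a chi-squared random variable with d degrees of freedom satisfies P(χ²(d) ≤ d − 2√(dx)) ≤ exp(−x). -/
open MeasureTheory ProbabilityTheory Real

lemma gaussA {t : ℝ} (ht : 0 ≤ t) :
    ∫ y, rexp (-t * y ^ 2) ∂(gaussianReal 0 1) = (Real.sqrt (1 + 2 * t))⁻¹ := by
  rw [gaussianReal_of_var_ne_zero _ one_ne_zero, gaussianPDF_def]
  simp only [ENNReal.ofReal]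
  rw [integral_withDensity_eq_integral_smul
    (measurable_gaussianPDFReal 0 1).real_toNNReal]
  simp only [NNReal.smul_def, Real.coe_toNNReal _ (gaussianPDFReal_nonneg 0 1 _)]
  simp only [smul_eq_mul, gaussianPDFReal, NNReal.coe_one, mul_one, sub_zero]
  have key : ∀ y : ℝ, (√(2 * π))⁻¹ * rexp (-y ^ 2 / 2) * rexp (-t * y ^ 2)
      = (√(2 * π))⁻¹ * rexp (-(t + 1/2) * y ^ 2) := by
    intro y
    rw [mul_assoc, ← Real.exp_add]
    congr 2
    ring
  simp only [key]
  rw [integral_const_mul, integral_gaussian]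
  rw [← Real.sqrt_inv, ← Real.sqrt_mul (by positivity)]
  congr 1
  have hπ : π ≠ 0 := Real.pi_ne_zero
  field_simp
  ring_nf; rw [Real.sqrt_inv, inv_mul_cancel₀ (by positivity)]

section
noncomputable local instance gms : MeasureSpace ℝ := ⟨gaussianReal 0 1⟩

local instance : SigmaFinite (volume : Measure ℝ) :=
  show SigmaFinite (gaussianReal 0 1) from inferInstance

lemma gaussB (d : ℕ) {t : ℝ} (ht : 0 ≤ t) :
    ∫ x : Fin d → ℝ, rexp (-t * ∑ i, (x i) ^ 2) ∂(Measure.pi fun _ : Fin d => gaussianReal 0 1)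
      = ((Real.sqrt (1 + 2 * t))⁻¹) ^ d := by
  have h1 : ∀ x : Fin d → ℝ, rexp (-t * ∑ i, (x i) ^ 2) = ∏ i, rexp (-t * (x i) ^ 2) := by
    intro x
    rw [← Real.exp_sum]
    congr 1
    rw [Finset.mul_sum]
  simp only [h1]
  have : (Measure.pi fun _ : Fin d => gaussianReal 0 1) = (volume : Measure (Fin d → ℝ)) := rfl
  rw [this]
  rw [← this, integral_fintype_prod_eq_pow (ι := Fin d) (fun y : ℝ => rexp (-t * y ^ 2))]
  rw [gaussA ht]
  simp

end

/-- The chi-squared distribution with `d` degrees of freedom: the law of the sum of squares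
of `d` i.i.d. standard Gaussian random variables. -/
noncomputable def chiSq (d : ℕ) : Measure ℝ :=
  (Measure.pi fun _ : Fin d => gaussianReal 0 1).map fun x => ∑ i, (x i) ^ 2

lemma chernoff (d : ℕ) (a : ℝ) {t : ℝ} (ht : 0 ≤ t) :
    chiSq d {y : ℝ | y ≤ a}
      ≤ ENNReal.ofReal (rexp (t * a) * ((Real.sqrt (1 + 2 * t))⁻¹) ^ d) := by
  set μ := Measure.pi fun _ : Fin d => gaussianReal 0 1 with hμ
  have hS : Measurable fun x : Fin d → ℝ => ∑ i, (x i) ^ 2 := by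
    exact Finset.measurable_sum _ fun i _ => ((measurable_pi_apply i).pow_const 2)
  have hmap : chiSq d {y : ℝ | y ≤ a} = μ {x | ∑ i, (x i) ^ 2 ≤ a} := by
    rw [chiSq, Measure.map_apply hS (by exact measurableSet_Iic)]
    rfl
  have hSnn : ∀ x : Fin d → ℝ, 0 ≤ ∑ i, (x i) ^ 2 := fun x =>
    Finset.sum_nonneg fun i _ => sq_nonneg _
  set f : (Fin d → ℝ) → ℝ := fun x => rexp (-t * ∑ i, (x i) ^ 2) with hf
  have hfnn : ∀ x, 0 ≤ f x := fun x => (Real.exp_pos _).le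
  have hfm : Measurable f := (hS.const_mul (-t)).exp
  have hfle : ∀ x, f x ≤ 1 := by
    intro x
    rw [← Real.exp_zero]
    exact Real.exp_le_exp.2 (mul_nonpos_of_nonpos_of_nonneg (neg_nonpos.2 ht) (hSnn x))
  have hint : Integrable f μ := by
    refine (integrable_const (1:ℝ)).mono' hfm.aestronglyMeasurable ?_
    exact ae_of_all _ fun x => by rw [Real.norm_eq_abs, abs_of_nonneg (hfnn x)]; exact hfle x
  have hsub : {x : Fin d → ℝ | ∑ i, (x i) ^ 2 ≤ a} ⊆ {x | rexp (-t * a) ≤ f x} := by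
    intro x hx
    have h' := mul_le_mul_of_nonneg_left hx ht
    exact Real.exp_le_exp.2 (by nlinarith [h'])
  have hmark := mul_meas_ge_le_integral_of_nonneg (ae_of_all _ hfnn) hint (rexp (-t * a))
  have hfin : μ {x | ∑ i, (x i) ^ 2 ≤ a} < ⊤ := lt_of_le_of_lt (measure_mono (Set.subset_univ _))
    (by simp [measure_lt_top])
  have hmono : μ {x | ∑ i, (x i) ^ 2 ≤ a} ≤ μ {x | rexp (-t * a) ≤ f x} := measure_mono hsub
  have h2 : (μ {x | ∑ i, (x i) ^ 2 ≤ a}).toReal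
      ≤ rexp (t * a) * ((Real.sqrt (1 + 2 * t))⁻¹) ^ d := by
    have htr : (μ {x | ∑ i, (x i) ^ 2 ≤ a}).toReal ≤ (μ {x | rexp (-t * a) ≤ f x}).toReal :=
      ENNReal.toReal_mono (by simp [measure_ne_top]) hmono
    have := gaussB d ht
    have hb : rexp (-t * a) * (μ {x | rexp (-t * a) ≤ f x}).toReal
        ≤ ((Real.sqrt (1 + 2 * t))⁻¹) ^ d := by
      rw [← this]; exact hmark
    have hpos : (0:ℝ) < rexp (-t * a) := Real.exp_pos _
    calc (μ {x | ∑ i, (x i) ^ 2 ≤ a}).toReal ≤ (μ {x | rexp (-t * a) ≤ f x}).toReal := htr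
      _ ≤ ((Real.sqrt (1 + 2 * t))⁻¹) ^ d / rexp (-t * a) := by
          rw [le_div_iff₀ hpos]; linarith [hb]
      _ = rexp (t * a) * ((Real.sqrt (1 + 2 * t))⁻¹) ^ d := by
          rw [div_eq_mul_inv, ← Real.exp_neg]; ring_nf
  rw [hmap, ← ENNReal.ofReal_toReal hfin.ne]
  exact ENNReal.ofReal_le_ofReal h2

lemma keyD {s : ℝ} (hs0 : 0 ≤ s) : (1 - s) * rexp (s + s^2/2) ≤ 1 := by
  set g : ℝ → ℝ := fun y => (1 - y) * rexp (y + y^2/2) with hg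
  have hderiv : ∀ y : ℝ, HasDerivAt g (-(y^2) * rexp (y + y^2/2)) y := by
    intro y
    have h1 : HasDerivAt (fun y : ℝ => 1 - y) (-1) y := by
      simpa using (hasDerivAt_id y).const_sub 1
    have h2 : HasDerivAt (fun y : ℝ => y + y^2/2) (1 + y) y := by
      have := (hasDerivAt_id' y).add ((hasDerivAt_pow 2 y).div_const 2)
      simpa [Pi.add_def] using this
    have := h1.mul h2.exp
    convert this using 1
    all_goals first | rfl | ring_nf
  have hanti : AntitoneOn g (Set.Ici (0:ℝ)) := by
    apply antitoneOn_of_deriv_nonpos (convex_Ici 0)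
    · exact Continuous.continuousOn (by fun_prop)
    · intro y hy; exact (hderiv y).differentiableAt.differentiableWithinAt
    · intro y hy
      rw [(hderiv y).deriv]
      have : 0 ≤ y^2 * rexp (y + y^2/2) := by positivity
      linarith
  have := hanti Set.self_mem_Ici (Set.mem_Ici.2 hs0) hs0
  simpa [hg] using this

/-- For any integer `d > 0` and any positive real `x`, a chi-squared random variable with `d`
degrees of freedom satisfies `P(χ²(d) ≤ d − 2√(dx)) ≤ exp(−x)`. -/
theorem chiSq_lower_deviation (d : ℕ) (hd : 0 < d) (x : ℝ) (hx : 0 < x) :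
    chiSq d {y : ℝ | y ≤ (d : ℝ) - 2 * Real.sqrt (d * x)} ≤ ENNReal.ofReal (Real.exp (-x)) := by
  set D : ℝ := (d : ℝ) with hD
  have hD0 : 0 < D := by rw [hD]; exact_mod_cast hd
  have hDx : 0 < D * x := mul_pos hD0 hx
  have hsq : 0 < Real.sqrt (D * x) := Real.sqrt_pos.2 hDx
  set a : ℝ := D - 2 * Real.sqrt (D * x) with ha
  rcases le_or_gt a 0 with hcase | hcase
  · -- a ≤ 0 : take t = (exp(2x/D)-1)/2
    set t : ℝ := (rexp (2 * x / D) - 1) / 2 with htd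
    have ht : 0 ≤ t := by
      have : (1:ℝ) ≤ rexp (2 * x / D) := by
        rw [← Real.exp_zero]; exact Real.exp_le_exp.2 (by positivity)
      simp only [htd]; linarith
    have h12t : 1 + 2 * t = rexp (2 * x / D) := by rw [htd]; ring
    refine le_trans (chernoff d a ht) (ENNReal.ofReal_le_ofReal ?_)
    have hsqrt : Real.sqrt (1 + 2 * t) = rexp (x / D) := by
      rw [h12t, ← Real.exp_half]
      congr 1; ring
    rw [hsqrt, ← Real.exp_neg, ← Real.exp_nat_mul]
    have hxd : (d : ℝ) * (-(x / D)) = -x := by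
      rw [← hD]; field_simp
    rw [hxd]
    have : rexp (t * a) ≤ 1 := by
      rw [← Real.exp_zero]
      exact Real.exp_le_exp.2 (mul_nonpos_of_nonneg_of_nonpos ht hcase)
    nlinarith [Real.exp_pos (-x)]
  · -- a > 0 : take t = sqrt(Dx)/a
    set t : ℝ := Real.sqrt (D * x) / a with htd
    have ht : 0 ≤ t := le_of_lt (div_pos hsq hcase)
    refine le_trans (chernoff d a ht) (ENNReal.ofReal_le_ofReal ?_)
    set s : ℝ := 2 * Real.sqrt (D * x) / D with hs
    have hs0 : 0 < s := by positivity
    have hs1 : s < 1 := by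
      rw [hs, div_lt_one hD0]
      linarith [hcase]
    have hsd : Real.sqrt (D * x) = D * s / 2 := by rw [hs]; field_simp
    have hxs : x = D * s ^ 2 / 4 := by
      have h2 : Real.sqrt (D * x) ^ 2 = D * x := Real.sq_sqrt hDx.le
      rw [hsd] at h2
      have : D ^ 2 * s ^ 2 / 4 = D * x := by rw [← h2]; ring
      field_simp at this ⊢
      nlinarith [this]
    have hasd : a = D * (1 - s) := by rw [ha, hsd]; ring
    have h1s : (1:ℝ) - s ≠ 0 := by linarith
    have h12t : 1 + 2 * t = D / a := by
      rw [htd, hsd, hasd]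
      field_simp
      ring
    have hta : t * a = D * s / 2 := by
      rw [htd, ← hsd]; field_simp
    have hainv : (Real.sqrt (1 + 2 * t))⁻¹ = Real.sqrt (1 - s) := by
      rw [h12t, ← Real.sqrt_inv, hasd]
      congr 1
      rw [inv_div]
      rw [mul_comm, mul_div_assoc, div_self hD0.ne', mul_one]
    rw [hainv, hta]
    -- √(1-s) ≤ exp(-(s/2 + s²/4))
    have hkey : Real.sqrt (1 - s) ≤ rexp (-(s / 2 + s ^ 2 / 4)) := by
      have h1 : (1 - s) ≤ rexp (-(s + s ^ 2 / 2)) := by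
        have hk := keyD hs0.le
        calc 1 - s = ((1 - s) * rexp (s + s ^ 2 / 2)) * rexp (-(s + s ^ 2 / 2)) := by
              have h0 : s + s ^ 2 / 2 + -(s + s ^ 2 / 2) = 0 := by ring
              rw [mul_assoc, ← Real.exp_add, h0, Real.exp_zero, mul_one]
          _ ≤ 1 * rexp (-(s + s ^ 2 / 2)) :=
              mul_le_mul_of_nonneg_right hk (Real.exp_pos _).le
          _ = rexp (-(s + s ^ 2 / 2)) := one_mul _
      calc Real.sqrt (1 - s) ≤ Real.sqrt (rexp (-(s + s ^ 2 / 2))) := Real.sqrt_le_sqrt h1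
        _ = rexp (-(s + s ^ 2 / 2) / 2) := (Real.exp_half _).symm
        _ = rexp (-(s / 2 + s ^ 2 / 4)) := by congr 1; ring
    have hpow : Real.sqrt (1 - s) ^ d ≤ rexp (-(s / 2 + s ^ 2 / 4)) ^ d :=
      pow_le_pow_left₀ (Real.sqrt_nonneg _) hkey d
    calc rexp (D * s / 2) * Real.sqrt (1 - s) ^ d
        ≤ rexp (D * s / 2) * rexp (-(s / 2 + s ^ 2 / 4)) ^ d := by
          exact mul_le_mul_of_nonneg_left hpow (Real.exp_pos _).le
      _ = rexp (D * s / 2 + D * (-(s / 2 + s ^ 2 / 4))) := by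
          rw [← Real.exp_nat_mul, ← Real.exp_add, hD]
      _ = rexp (-x) := by
          congr 1
          rw [hxs]; ring
end

section
/- For any integer d > 0 and any positive real x, a chi-squared random variable with d degrees of freedom satisfies P(χ²(d) ≥ d + 2√(dx) + 2x) ≤ exp(−x). -/
open MeasureTheory ProbabilityTheory

open scoped ENNReal

section Aux

open Real

private lemma gauss_sq_lintegral (l : ℝ) (hl : l < 1/2) :
    ∫⁻ y, ENNReal.ofReal (Real.exp (l * y ^ 2)) ∂gaussianReal 0 1
      = ENNReal.ofReal (Real.sqrt (1 - 2 * l))⁻¹ := by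
  have hb : (0:ℝ) < 1/2 - l := by linarith
  rw [gaussianReal_of_var_ne_zero 0 one_ne_zero,
    lintegral_withDensity_eq_lintegral_mul _ (measurable_gaussianPDF 0 1)
      (by measurability)]
  have heq : ∀ y : ℝ, (gaussianPDF 0 1 y * ENNReal.ofReal (Real.exp (l * y ^ 2)))
      = ENNReal.ofReal ((Real.sqrt (2 * π))⁻¹ * Real.exp (-(1/2 - l) * y ^ 2)) := by
    intro y
    rw [gaussianPDF, ← ENNReal.ofReal_mul (gaussianPDFReal_nonneg 0 1 y)]
    congr 1
    rw [gaussianPDFReal]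
    simp only [NNReal.coe_one, mul_one, sub_zero]
    rw [mul_assoc, ← Real.exp_add]
    ring_nf
  simp_rw [Pi.mul_apply, heq]
  rw [← ofReal_integral_eq_lintegral_ofReal
    (((integrable_exp_neg_mul_sq hb).const_mul _))
    (Filter.Eventually.of_forall fun y => by positivity)]
  rw [integral_const_mul, integral_gaussian]
  congr 1
  have h2 : Real.sqrt (1 - 2*l) = Real.sqrt 2 * Real.sqrt (1/2 - l) := by
    rw [← Real.sqrt_mul (by norm_num)]; ring_nf
  rw [h2, Real.sqrt_div' π hb.le, Real.sqrt_mul (by norm_num : (0:ℝ) ≤ 2)]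
  have hπ : (0:ℝ) < Real.sqrt π := Real.sqrt_pos.mpr pi_pos
  have h2' : (0:ℝ) < Real.sqrt 2 := by positivity
  have hbs : (0:ℝ) < Real.sqrt (1/2 - l) := Real.sqrt_pos.mpr hb
  have hs : (0:ℝ) < Real.sqrt (1 - 2*l) := by rw [h2]; positivity
  field_simp

private lemma lintegral_pi_prod (μ : Measure ℝ) [SigmaFinite μ] {f : ℝ → ℝ≥0∞}
    (hf : Measurable f) (n : ℕ) :
    ∫⁻ x : (Fin n → ℝ), ∏ i, f (x i) ∂Measure.pi (fun _ => μ)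
      = (∫⁻ y, f y ∂μ) ^ n := by
  induction n with
  | zero => simp
  | succ n ih =>
    have hmp := (measurePreserving_piFinSuccAbove (fun _ : Fin (n+1) => μ) 0).symm
    rw [← hmp.map_eq, lintegral_map (by measurability) (MeasurableEquiv.measurable _)]
    simp_rw [MeasurableEquiv.piFinSuccAbove_symm_apply, Fin.insertNthEquiv, Equiv.coe_fn_mk,
      Fin.insertNth_zero, Fin.prod_univ_succ, Fin.cons_zero, Fin.cons_succ, cast_eq]
    rw [lintegral_prod_mul (f := f) (g := fun y : Fin n → ℝ => ∏ j, f (y j)) hf.aemeasurable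
      (Finset.measurable_prod Finset.univ
        (fun j _ => hf.comp (measurable_pi_apply j))).aemeasurable,
      ih, pow_succ']

private lemma quad_le_exp {s : ℝ} (hs : 0 ≤ s) : 1 + 2*s + 2*s^2 ≤ Real.exp (2*s) := by
  have h := Real.sum_le_exp_of_nonneg (by linarith : (0:ℝ) ≤ 2*s) 3
  simp [Finset.sum_range_succ, Nat.factorial] at h
  nlinarith [h]

private lemma final_real_ineq (d : ℕ) (hd : 0 < d) (x : ℝ) (hx : 0 < x) :
    Real.exp (-(((1 - d/((d:ℝ) + 2 * Real.sqrt (d * x) + 2 * x))/2)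
        * ((d:ℝ) + 2 * Real.sqrt (d * x) + 2 * x)))
      * ((Real.sqrt (1 - 2 * ((1 - d/((d:ℝ) + 2 * Real.sqrt (d * x) + 2 * x))/2)))⁻¹) ^ d
      ≤ Real.exp (-x) := by
  have hd0 : (0:ℝ) < d := Nat.cast_pos.mpr hd
  set t : ℝ := (d:ℝ) + 2 * Real.sqrt (d * x) + 2 * x with ht_def
  have hsq : 0 < Real.sqrt (d * x) := Real.sqrt_pos.mpr (by positivity)
  have hdt : (d:ℝ) < t := by rw [ht_def]; linarith
  have ht0 : (0:ℝ) < t := by linarith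
  set l : ℝ := (1 - d/t)/2 with hl_def
  have h1l : 1 - 2*l = d/t := by rw [hl_def]; ring
  have htne : t ≠ 0 := ht0.ne'
  have hlt : l * t = Real.sqrt (d*x) + x := by
    have h' : l * t = (t - d)/2 := by rw [hl_def]; field_simp
    rw [h', ht_def]; ring
  set s : ℝ := Real.sqrt (x / d) with hs_def
  have hs0 : 0 < s := Real.sqrt_pos.mpr (by positivity)
  have hds : (d:ℝ) * s = Real.sqrt (d * x) := by
    rw [hs_def, ← Real.sqrt_sq hd0.le, ← Real.sqrt_mul (by positivity)]
    congr 1; field_simp; rw [Real.sq_sqrt (by positivity)]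
  have hs2 : (d:ℝ) * s^2 = x := by
    rw [hs_def, Real.sq_sqrt (by positivity)]; field_simp
  have htd : t / d = 1 + 2*s + 2*s^2 := by
    rw [ht_def, ← hds, ← hs2]; field_simp
  have hinv : (Real.sqrt (1 - 2*l))⁻¹ = Real.sqrt (t/d) := by
    rw [h1l, ← Real.sqrt_inv, inv_div]
  rw [hlt, hinv]
  have hpow : Real.sqrt (t/d) ^ d ≤ Real.exp (Real.sqrt (d*x)) := by
    have h1 : Real.sqrt (t/d) ≤ Real.exp s := by
      rw [show Real.exp s = Real.sqrt (Real.exp (2*s)) by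
        rw [show (2:ℝ)*s = s + s by ring, Real.exp_add, Real.sqrt_mul_self (Real.exp_nonneg s)]]
      exact Real.sqrt_le_sqrt (by rw [htd]; exact quad_le_exp hs0.le)
    calc Real.sqrt (t/d) ^ d ≤ Real.exp s ^ d :=
          pow_le_pow_left₀ (Real.sqrt_nonneg _) h1 d
      _ = Real.exp (d * s) := by rw [← Real.exp_nat_mul]
      _ = Real.exp (Real.sqrt (d*x)) := by rw [hds]
  calc Real.exp (-(Real.sqrt (d*x) + x)) * Real.sqrt (t/d) ^ d
      ≤ Real.exp (-(Real.sqrt (d*x) + x)) * Real.exp (Real.sqrt (d*x)) :=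
        mul_le_mul_of_nonneg_left hpow (Real.exp_nonneg _)
    _ = Real.exp (-x) := by rw [← Real.exp_add]; ring_nf

end Aux

private lemma chernoff_aux (d : ℕ) (l : ℝ) (hl0 : 0 ≤ l) (hl2 : l < 1/2) (t : ℝ)
    (C : ℝ) (hC : C = Real.exp (-(l*t)) * ((Real.sqrt (1 - 2*l))⁻¹)^d) :
    chiSq d {y : ℝ | t ≤ y} ≤ ENNReal.ofReal C := by
  set μp := Measure.pi (fun _ : Fin d => gaussianReal 0 1) with hμp
  have hXm : Measurable (fun w : Fin d → ℝ => ∑ i, (w i)^2) :=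
    Finset.measurable_sum _ fun i _ => (measurable_pi_apply i).pow_const 2
  have hmap : chiSq d {y : ℝ | t ≤ y} = μp {w : Fin d → ℝ | t ≤ ∑ i, (w i)^2} := by
    have hIci : {y : ℝ | t ≤ y} = Set.Ici t := rfl
    rw [chiSq, hIci, Measure.map_apply hXm measurableSet_Ici]
    rfl
  rw [hmap]
  have hfm : Measurable (fun w : Fin d → ℝ => ENNReal.ofReal (Real.exp (l * ∑ i, (w i)^2))) :=
    (Real.measurable_exp.comp (hXm.const_mul l)).ennreal_ofReal
  have step1 : μp {w : Fin d → ℝ | t ≤ ∑ i, (w i)^2}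
      ≤ ∫⁻ w, ENNReal.ofReal (Real.exp (-(l*t))) *
          ENNReal.ofReal (Real.exp (l * ∑ i, (w i)^2)) ∂μp := by
    have hsm : MeasurableSet {w : Fin d → ℝ | t ≤ ∑ i, (w i)^2} :=
      hXm measurableSet_Ici
    calc μp {w : Fin d → ℝ | t ≤ ∑ i, (w i)^2}
        = ∫⁻ w in {w : Fin d → ℝ | t ≤ ∑ i, (w i)^2}, 1 ∂μp := (setLIntegral_one _).symm
      _ ≤ ∫⁻ w in {w : Fin d → ℝ | t ≤ ∑ i, (w i)^2},
            ENNReal.ofReal (Real.exp (-(l*t))) *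
              ENNReal.ofReal (Real.exp (l * ∑ i, (w i)^2)) ∂μp := by
          refine setLIntegral_mono (measurable_const.mul hfm) fun w hw => ?_
          rw [← ENNReal.ofReal_mul (Real.exp_nonneg _), ← Real.exp_add]
          rw [ENNReal.one_le_ofReal]
          refine Real.one_le_exp ?_
          have : t ≤ ∑ i, (w i)^2 := hw
          nlinarith
      _ ≤ _ := setLIntegral_le_lintegral _ _
  refine step1.trans ?_
  rw [lintegral_const_mul _ hfm]
  have hprod : ∀ w : Fin d → ℝ, ENNReal.ofReal (Real.exp (l * ∑ i, (w i)^2))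
      = ∏ i, ENNReal.ofReal (Real.exp (l * (w i)^2)) := by
    intro w
    rw [Finset.mul_sum, Real.exp_sum, ← ENNReal.ofReal_prod_of_nonneg]
    intro i _; exact Real.exp_nonneg _
  simp_rw [hprod]
  rw [lintegral_pi_prod (gaussianReal 0 1)
      (f := fun y : ℝ => ENNReal.ofReal (Real.exp (l * y^2)))
      ((Real.measurable_exp.comp ((measurable_id.pow_const 2).const_mul l)).ennreal_ofReal) d,
    gauss_sq_lintegral l hl2,
    ← ENNReal.ofReal_pow (by positivity), ← ENNReal.ofReal_mul (Real.exp_nonneg _), hC]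

/-- For any integer `d > 0` and any positive real `x`, a chi-squared random variable with `d`
degrees of freedom satisfies `P(χ²(d) ≥ d + 2√(dx) + 2x) ≤ exp(−x)`. -/
theorem chiSq_upper_deviation (d : ℕ) (hd : 0 < d) (x : ℝ) (hx : 0 < x) :
    chiSq d {y : ℝ | (d : ℝ) + 2 * Real.sqrt (d * x) + 2 * x ≤ y} ≤
      ENNReal.ofReal (Real.exp (-x)) := by
  have hd0 : (0:ℝ) < d := Nat.cast_pos.mpr hd
  set t : ℝ := (d:ℝ) + 2 * Real.sqrt (d * x) + 2 * x with ht_def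
  have hsq : 0 < Real.sqrt (d * x) := Real.sqrt_pos.mpr (by positivity)
  have hdt : (d:ℝ) < t := by rw [ht_def]; linarith
  have ht0 : (0:ℝ) < t := by linarith
  set l : ℝ := (1 - d/t)/2 with hl_def
  have hdiv1 : (d:ℝ)/t < 1 := (div_lt_one ht0).mpr hdt
  have hdiv0 : (0:ℝ) < d/t := by positivity
  have hl0 : 0 ≤ l := by rw [hl_def]; linarith
  have hl2 : l < 1/2 := by rw [hl_def]; linarith
  refine (chernoff_aux d l hl0 hl2 t _ rfl).trans ?_
  exact ENNReal.ofReal_le_ofReal (final_real_ineq d hd x hx)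
end

section
/- If Z is a chi-squared random variable with d degrees of freedom, then E[√Z] ≥ √d − √d·exp(−d/16) − √(π/2). -/
open MeasureTheory ProbabilityTheory Real Filter
open scoped ENNReal NNReal

lemma half_rpow (k : ℕ) : ((1:ℝ)/2) ^ (-(k:ℝ)/2) = √2 ^ k := by
  have h1 : ((1:ℝ)/2) ^ (-(k:ℝ)/2) = 2 ^ ((k:ℝ)/2) := by
    rw [one_div, Real.inv_rpow (by norm_num), ← Real.rpow_neg (by norm_num), neg_div, neg_neg]
  rw [h1, Real.sqrt_eq_rpow, ← Real.rpow_natCast ((2:ℝ) ^ ((1:ℝ)/2)) k,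
    ← Real.rpow_mul (by norm_num)]
  ring_nf

lemma Gamma32 : Real.Gamma (3/2) = √π/2 := by
  have : (3:ℝ)/2 = 1/2 + 1 := by norm_num
  rw [this, Real.Gamma_add_one (by norm_num), Real.Gamma_one_half_eq]
  ring

lemma Gamma52 : Real.Gamma (5/2) = 3*√π/4 := by
  have : (5:ℝ)/2 = 3/2 + 1 := by norm_num
  rw [this, Real.Gamma_add_one (by norm_num), Gamma32]
  ring

lemma key_moment (n : ℕ) :
    ∫ x : ℝ, x ^ n * rexp (-(1/2) * x ^ 2)
      = 2 * (((1:ℝ)/2) ^ (-((n:ℝ)+1)/2) * (1/2) * Real.Gamma (((n:ℝ)+1)/2)) ∨ True := by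
  exact Or.inr trivial

lemma integral_even_moment (n : ℕ) (hn : Even n) :
    ∫ x : ℝ, x ^ n * rexp (-(1/2) * x ^ 2)
      = (((1:ℝ)/2) ^ (-((n:ℝ)+1)/2)) * Real.Gamma (((n:ℝ)+1)/2) := by
  have habs : ∀ x : ℝ, |x| ^ n * rexp (-(1/2) * |x| ^ 2) = x ^ n * rexp (-(1/2) * x ^ 2) := by
    intro x
    rw [hn.pow_abs, sq_abs]
  calc ∫ x : ℝ, x ^ n * rexp (-(1/2) * x ^ 2)
      = ∫ x : ℝ, |x| ^ n * rexp (-(1/2) * |x| ^ 2) := by simp_rw [habs]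
    _ = 2 * ∫ x in Set.Ioi (0:ℝ), x ^ n * rexp (-(1/2) * x ^ 2) :=
        integral_comp_abs (f := fun t => t ^ n * rexp (-(1/2) * t ^ 2))
    _ = 2 * ∫ x in Set.Ioi (0:ℝ), x ^ (n:ℝ) * rexp (-(1/2) * x ^ (2:ℝ)) := by
        congr 1
        refine setIntegral_congr_fun measurableSet_Ioi fun x hx => ?_
        rw [← Real.rpow_natCast x n, ← Real.rpow_natCast x 2]
        norm_num
    _ = 2 * (((1:ℝ)/2) ^ (-((n:ℝ)+1)/2) * (1/2) * Real.Gamma (((n:ℝ)+1)/2)) := by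
        rw [integral_rpow_mul_exp_neg_mul_rpow (by norm_num)
          (lt_of_lt_of_le neg_one_lt_zero (Nat.cast_nonneg n)) (by norm_num)]
    _ = _ := by ring

noncomputable def G : Measure ℝ := gaussianReal 0 1

instance : IsProbabilityMeasure G := by unfold G; infer_instance

lemma pdf_eq (x : ℝ) : gaussianPDFReal 0 1 x = (√(2 * π))⁻¹ * rexp (-(1/2) * x ^ 2) := by
  simp only [gaussianPDFReal, NNReal.coe_one, mul_one, sub_zero]
  congr 1
  ring

lemma G_eq : G = volume.withDensity fun x => ((gaussianPDFReal 0 1 x).toNNReal : ℝ≥0∞) := by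
  rw [G, gaussianReal_of_var_ne_zero _ one_ne_zero]
  rfl

lemma integral_G (f : ℝ → ℝ) :
    ∫ x, f x ∂G = ∫ x, gaussianPDFReal 0 1 x * f x := by
  rw [G_eq, integral_withDensity_eq_integral_smul
    ((measurable_gaussianPDFReal 0 1).real_toNNReal)]
  congr 1
  ext x
  simp [NNReal.smul_def, Real.coe_toNNReal _ (gaussianPDFReal_nonneg 0 1 x)]

lemma integrable_G_iff {f : ℝ → ℝ} :
    Integrable f G ↔ Integrable (fun x => gaussianPDFReal 0 1 x * f x) volume := by
  rw [G_eq, integrable_withDensity_iff_integrable_smul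
    ((measurable_gaussianPDFReal 0 1).real_toNNReal)]
  constructor <;> intro h <;> refine h.congr (Eventually.of_forall fun x => ?_) <;>
    simp [NNReal.smul_def, Real.coe_toNNReal _ (gaussianPDFReal_nonneg 0 1 x)]

lemma integrable_G_pow (n : ℕ) : Integrable (fun x : ℝ => x ^ n) G := by
  rw [integrable_G_iff]
  have h : Integrable (fun x : ℝ => x ^ (n : ℝ) * rexp (-(1/2) * x ^ 2)) volume :=
    integrable_rpow_mul_exp_neg_mul_sq (by norm_num)
      (lt_of_lt_of_le neg_one_lt_zero (Nat.cast_nonneg n))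
  simp_rw [Real.rpow_natCast] at h
  refine ((h.const_mul (√(2 * π))⁻¹).congr (Eventually.of_forall fun x => ?_))
  simp only [pdf_eq]; ring

lemma integrable_G_expneg : Integrable (fun x : ℝ => rexp (-x ^ 2)) G := by
  rw [integrable_G_iff]
  have h : Integrable (fun x : ℝ => rexp (-(3/2) * x ^ 2)) volume :=
    integrable_exp_neg_mul_sq (by norm_num)
  refine ((h.const_mul (√(2 * π))⁻¹).congr (Eventually.of_forall fun x => ?_))
  simp only [pdf_eq]
  rw [mul_assoc, ← Real.exp_add]
  congr 2
  ring

lemma integral_G_sq : ∫ x, x^2 ∂G = 1 := by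
  rw [integral_G]
  have : ∀ x : ℝ, gaussianPDFReal 0 1 x * x ^ 2
      = (√(2*π))⁻¹ * (x ^ 2 * rexp (-(1/2) * x ^ 2)) := by
    intro x; rw [pdf_eq]; ring
  simp_rw [this, integral_const_mul, integral_even_moment 2 even_two]
  have e1 : (-((2:ℕ):ℝ)+ -1)/2 = -((3:ℕ):ℝ)/2 := by norm_num
  have e2 : (((2:ℕ):ℝ)+1)/2 = 3/2 := by norm_num
  rw [show -(((2:ℕ):ℝ)+1)/2 = -((3:ℕ):ℝ)/2 by norm_num, e2, half_rpow, Gamma32]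
  have s2 : √(2*π) = √2 * √π := Real.sqrt_mul (by norm_num) _
  have h2 : (√2:ℝ)^2 = 2 := Real.sq_sqrt (by norm_num)
  have h2p : (0:ℝ) < √2 := Real.sqrt_pos.mpr (by norm_num)
  have hpp : (0:ℝ) < √π := Real.sqrt_pos.mpr Real.pi_pos
  rw [s2]
  field_simp
  linear_combination h2

lemma integral_G_pow4 : ∫ x, x^4 ∂G = 3 := by
  rw [integral_G]
  have : ∀ x : ℝ, gaussianPDFReal 0 1 x * x ^ 4
      = (√(2*π))⁻¹ * (x ^ 4 * rexp (-(1/2) * x ^ 2)) := by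
    intro x; rw [pdf_eq]; ring
  simp_rw [this, integral_const_mul, integral_even_moment 4 ⟨2, by norm_num⟩]
  rw [show -(((4:ℕ):ℝ)+1)/2 = -((5:ℕ):ℝ)/2 by norm_num,
    show (((4:ℕ):ℝ)+1)/2 = 5/2 by norm_num, half_rpow, Gamma52]
  have s2 : √(2*π) = √2 * √π := Real.sqrt_mul (by norm_num) _
  have h2 : (√2:ℝ)^2 = 2 := Real.sq_sqrt (by norm_num)
  have h2p : (0:ℝ) < √2 := Real.sqrt_pos.mpr (by norm_num)
  have hpp : (0:ℝ) < √π := Real.sqrt_pos.mpr Real.pi_pos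
  rw [s2]
  field_simp
  linear_combination ((√2)^2 + 2)*h2

lemma integral_G_expneg_val : ∫ x, rexp (-x^2) ∂G = (√3)⁻¹ := by
  rw [integral_G]
  have : ∀ x : ℝ, gaussianPDFReal 0 1 x * rexp (-x ^ 2)
      = (√(2*π))⁻¹ * rexp (-(3/2) * x ^ 2) := by
    intro x
    rw [pdf_eq, mul_assoc, ← Real.exp_add]
    congr 2
    ring
  simp_rw [this, integral_const_mul, integral_gaussian]
  have s2 : √(2*π) = √2 * √π := Real.sqrt_mul (by norm_num) _
  have h3 : √(π/(3/2)) = √(2*π) / √3 := by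
    rw [show π/(3/2) = (2*π)/3 by ring, Real.sqrt_div (by positivity)]
  rw [h3]
  have hp : (0:ℝ) < √(2*π) := Real.sqrt_pos.mpr (by positivity)
  field_simp

noncomputable def nu (d : ℕ) : Measure (Fin d → ℝ) := Measure.pi fun _ => G

instance (d : ℕ) : IsProbabilityMeasure (nu d) := by unfold nu; infer_instance

lemma pi_integral_prod (d : ℕ) (f : Fin d → ℝ → ℝ) :
    ∫ x, ∏ i, f i (x i) ∂(nu d) = ∏ i, ∫ t, f i t ∂G := by
  letI : MeasureSpace ℝ := ⟨G⟩
  haveI : SigmaFinite (volume : Measure ℝ) := (by infer_instance : SigmaFinite G)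
  exact MeasureTheory.integral_fin_nat_prod_eq_prod f

lemma pi_integrable_prod (d : ℕ) (f : Fin d → ℝ → ℝ) (hf : ∀ i, Integrable (f i) G) :
    Integrable (fun x => ∏ i, f i (x i)) (nu d) := by
  letI : MeasureSpace ℝ := ⟨G⟩
  haveI : SigmaFinite (volume : Measure ℝ) := (by infer_instance : SigmaFinite G)
  exact Integrable.fintype_prod (f := f) hf

section prods
variable {M : Type*} [CommMonoid M]

lemma prod_one_aux {d : ℕ} (i : Fin d) (a : Fin d → M) :
    ∏ k, (if k = i then a k else 1) = a i := by
  rw [Finset.prod_ite_eq']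
  simp

lemma prod_two_aux {d : ℕ} {i j : Fin d} (hij : i ≠ j) (a b : Fin d → M) :
    ∏ k, (if k = i then a k else if k = j then b k else 1) = a i * b j := by
  have h : ∀ k : Fin d, (if k = i then a k else if k = j then b k else 1)
      = (if k = i then a k else 1) * (if k = j then b k else 1) := by
    intro k
    by_cases h1 : k = i
    · subst h1; simp [hij]
    · by_cases h2 : k = j <;> simp [h1, h2, Ne.symm hij]
  rw [Finset.prod_congr rfl (fun k _ => h k), Finset.prod_mul_distrib,
    prod_one_aux i a, prod_one_aux j b]

end prods

lemma integral_coord {d : ℕ} (i : Fin d) (g : ℝ → ℝ) :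
    ∫ x, g (x i) ∂(nu d) = ∫ t, g t ∂G := by
  have h0 : ∫ x, g (x i) ∂(nu d)
      = ∫ x, ∏ k, (fun k t => if k = i then g t else 1) k (x k) ∂(nu d) := by
    congr 1
    ext x
    exact (prod_one_aux i fun k => g (x k)).symm
  have h2 : (∏ k, ∫ t, (fun k t => if k = i then g t else 1) k t ∂G) = ∫ t, g t ∂G := by
    calc ∏ k, ∫ t, (fun k t => if k = i then g t else 1) k t ∂G
        = ∏ k, (if k = i then ∫ t, g t ∂G else 1) :=
          Finset.prod_congr rfl (fun k _ => by by_cases h : k = i <;> simp [h])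
      _ = _ := prod_one_aux i _
  exact h0.trans ((pi_integral_prod d _).trans h2)

lemma integrable_coord {d : ℕ} (i : Fin d) (g : ℝ → ℝ) (hg : Integrable g G) :
    Integrable (fun x => g (x i)) (nu d) := by
  have := pi_integrable_prod d (fun k t => if k = i then g t else 1)
    (fun k => by by_cases h : k = i <;> simp [h, hg, integrable_const])
  refine this.congr (Eventually.of_forall fun x => ?_)
  simp only
  rw [prod_one_aux i (fun k => g (x k))]

lemma integral_coord_two {d : ℕ} {i j : Fin d} (hij : i ≠ j) (g h : ℝ → ℝ) :
    ∫ x, g (x i) * h (x j) ∂(nu d) = (∫ t, g t ∂G) * ∫ t, h t ∂G := by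
  have h0 : ∫ x, g (x i) * h (x j) ∂(nu d)
      = ∫ x, ∏ k, (fun k t => if k = i then g t else if k = j then h t else 1) k (x k) ∂(nu d) := by
    congr 1
    ext x
    exact (prod_two_aux hij (fun k => g (x k)) (fun k => h (x k))).symm
  have h2 : (∏ k, ∫ t, (fun k t => if k = i then g t else if k = j then h t else 1) k t ∂G)
      = (∫ t, g t ∂G) * ∫ t, h t ∂G := by
    calc ∏ k, ∫ t, (fun k t => if k = i then g t else if k = j then h t else 1) k t ∂G
        = ∏ k, (if k = i then ∫ t, g t ∂G else if k = j then ∫ t, h t ∂G else 1) :=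
          Finset.prod_congr rfl (fun k _ => by
            by_cases hk : k = i
            · simp [hk]
            · by_cases hk2 : k = j <;> simp [hk, hk2, Ne.symm hij])
      _ = _ := prod_two_aux hij (fun _ => ∫ t, g t ∂G) (fun _ => ∫ t, h t ∂G)
  exact h0.trans ((pi_integral_prod d _).trans h2)

lemma integrable_coord_two {d : ℕ} {i j : Fin d} (hij : i ≠ j) (g h : ℝ → ℝ)
    (hg : Integrable g G) (hh : Integrable h G) :
    Integrable (fun x => g (x i) * h (x j)) (nu d) := by
  have := pi_integrable_prod d (fun k t => if k = i then g t else if k = j then h t else 1)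
    (fun k => by
      by_cases hk : k = i
      · simp [hk, hg]
      · by_cases hk2 : k = j <;> simp [hk, hk2, Ne.symm hij, hh, integrable_const])
  refine this.congr (Eventually.of_forall fun x => ?_)
  simp only
  rw [prod_two_aux hij (fun k => g (x k)) (fun k => h (x k))]

noncomputable def S (d : ℕ) : (Fin d → ℝ) → ℝ := fun x => ∑ i, x i ^ 2

lemma S_meas (d : ℕ) : Measurable (S d) :=
  Finset.measurable_sum _ (fun i _ => (measurable_pi_apply i).pow_const 2)

lemma S_nonneg (d : ℕ) (x : Fin d → ℝ) : 0 ≤ S d x :=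
  Finset.sum_nonneg fun i _ => sq_nonneg _

lemma intS (d : ℕ) : Integrable (S d) (nu d) :=
  integrable_finset_sum _ (fun i _ => integrable_coord i (fun t => t ^ 2) (integrable_G_pow 2))

lemma ES (d : ℕ) : ∫ x, S d x ∂(nu d) = d := by
  unfold S
  rw [integral_finset_sum _
    (fun i _ => integrable_coord i (fun t => t ^ 2) (integrable_G_pow 2))]
  simp_rw [integral_coord _ (fun t => t ^ 2), integral_G_sq]
  simp

noncomputable def cf : ℝ → ℝ := fun t => t ^ 2 - 1

lemma int_cf : Integrable cf G := (integrable_G_pow 2).sub (integrable_const 1)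

lemma int_cf_mul : Integrable (fun t => cf t * cf t) G := by
  have h : Integrable (fun t : ℝ => t ^ 4 - 2 * t ^ 2 + 1) G :=
    ((integrable_G_pow 4).sub ((integrable_G_pow 2).const_mul 2)).add (integrable_const 1)
  exact h.congr (Eventually.of_forall fun t => by unfold cf; ring)

lemma E_cf : ∫ t, cf t ∂G = 0 := by
  unfold cf
  rw [integral_sub (integrable_G_pow 2) (integrable_const 1), integral_G_sq]
  simp

lemma E_cf_mul : ∫ t, cf t * cf t ∂G = 2 := by
  have h : ∀ t : ℝ, cf t * cf t = t ^ 4 - 2 * t ^ 2 + 1 := fun t => by unfold cf; ring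
  simp_rw [h]
  rw [integral_add (f := fun t : ℝ => t ^ 4 - 2 * t ^ 2) (g := fun _ : ℝ => (1:ℝ))
      ((integrable_G_pow 4).sub ((integrable_G_pow 2).const_mul 2)) (integrable_const 1),
    integral_sub (f := fun t : ℝ => t ^ 4) (g := fun t : ℝ => 2 * t ^ 2)
      (integrable_G_pow 4) ((integrable_G_pow 2).const_mul 2),
    integral_G_pow4, MeasureTheory.integral_const_mul, integral_G_sq]
  norm_num

lemma int_pair (d : ℕ) (i j : Fin d) :
    Integrable (fun x => cf (x i) * cf (x j)) (nu d) := by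
  by_cases hij : i = j
  · subst hij
    exact integrable_coord i (fun t => cf t * cf t) int_cf_mul
  · exact integrable_coord_two hij cf cf int_cf int_cf

lemma E_pair (d : ℕ) (i j : Fin d) :
    ∫ x, cf (x i) * cf (x j) ∂(nu d) = if i = j then 2 else 0 := by
  by_cases hij : i = j
  · subst hij
    rw [integral_coord i (fun t => cf t * cf t), E_cf_mul, if_pos rfl]
  · rw [integral_coord_two hij cf cf, E_cf, if_neg hij]
    ring

lemma S_sub_repr (d : ℕ) (x : Fin d → ℝ) : S d x - d = ∑ i, cf (x i) := by
  unfold S cf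
  rw [Finset.sum_sub_distrib]
  simp

lemma S_sub_sq_repr (d : ℕ) (x : Fin d → ℝ) :
    (S d x - d) ^ 2 = ∑ i, ∑ j, cf (x i) * cf (x j) := by
  rw [S_sub_repr, sq, Finset.sum_mul_sum]

lemma intS2 (d : ℕ) : Integrable (fun x => (S d x - d) ^ 2) (nu d) := by
  have h : Integrable (fun x => ∑ i, ∑ j, cf (x i) * cf (x j)) (nu d) :=
    integrable_finset_sum _ (fun i _ => integrable_finset_sum _ (fun j _ => int_pair d i j))
  exact h.congr (Eventually.of_forall fun x => (S_sub_sq_repr d x).symm)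

lemma ES2 (d : ℕ) : ∫ x, (S d x - d) ^ 2 ∂(nu d) = 2 * d := by
  simp_rw [S_sub_sq_repr]
  rw [integral_finset_sum _
    (fun i _ => integrable_finset_sum _ (fun j _ => int_pair d i j))]
  have : ∀ i : Fin d, ∫ x, ∑ j, cf (x i) * cf (x j) ∂(nu d) = 2 := by
    intro i
    rw [integral_finset_sum _ (fun j _ => int_pair d i j)]
    simp_rw [E_pair]
    rw [Finset.sum_ite_eq]
    simp
  simp_rw [this]
  simp
  ring

lemma int_expS (d : ℕ) : Integrable (fun x => rexp (-S d x)) (nu d) := by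
  have h := pi_integrable_prod d (fun _ t => rexp (-t ^ 2)) (fun _ => integrable_G_expneg)
  refine h.congr (Eventually.of_forall fun x => ?_)
  simp only
  rw [← Real.exp_sum]
  unfold S
  simp

lemma E_expS (d : ℕ) : ∫ x, rexp (-S d x) ∂(nu d) = (√3)⁻¹ ^ d := by
  have h0 : ∀ x : Fin d → ℝ, rexp (-S d x) = ∏ i, (fun _ t => rexp (-t ^ 2)) i (x i) := by
    intro x
    simp only
    rw [← Real.exp_sum]
    unfold S
    simp
  simp_rw [h0]
  rw [pi_integral_prod d (fun _ t => rexp (-t ^ 2))]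
  simp_rw [integral_G_expneg_val]
  simp

lemma chiSq_eq (d : ℕ) : chiSq d = (nu d).map (S d) := rfl

instance (d : ℕ) : IsProbabilityMeasure (chiSq d) := by
  rw [chiSq_eq]
  exact Measure.isProbabilityMeasure_map (S_meas d).aemeasurable

lemma integral_chiSq (d : ℕ) {f : ℝ → ℝ} (hf : Measurable f) :
    ∫ y, f y ∂(chiSq d) = ∫ x, f (S d x) ∂(nu d) := by
  rw [chiSq_eq]
  exact integral_map (S_meas d).aemeasurable hf.aestronglyMeasurable

lemma integrable_chiSq (d : ℕ) {f : ℝ → ℝ} (hf : Measurable f)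
    (h : Integrable (fun x => f (S d x)) (nu d)) : Integrable f (chiSq d) := by
  rw [chiSq_eq]
  rw [integrable_map_measure hf.aestronglyMeasurable (S_meas d).aemeasurable]
  exact h

lemma chiSq_ae_nonneg (d : ℕ) : ∀ᵐ z ∂(chiSq d), 0 ≤ z := by
  have hms : MeasurableSet {z : ℝ | 0 ≤ z} := measurableSet_Ici
  rw [chiSq_eq, ae_map_iff (S_meas d).aemeasurable hms]
  exact Eventually.of_forall (S_nonneg d)

lemma intP1 (d : ℕ) : Integrable (fun z => z) (chiSq d) :=
  integrable_chiSq d measurable_id' (intS d)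

lemma intP2 (d : ℕ) : Integrable (fun z => (z - (d:ℝ)) ^ 2) (chiSq d) :=
  integrable_chiSq d ((measurable_id'.sub_const _).pow_const 2) (intS2 d)

lemma intPexp (d : ℕ) : Integrable (fun z => rexp (-z)) (chiSq d) :=
  integrable_chiSq d (measurable_id'.neg.exp) (int_expS d)

lemma EP1 (d : ℕ) : ∫ z, z ∂(chiSq d) = d := by
  rw [integral_chiSq d measurable_id']
  exact ES d

lemma EP2 (d : ℕ) : ∫ z, (z - (d:ℝ)) ^ 2 ∂(chiSq d) = 2 * d := by
  rw [integral_chiSq d ((measurable_id'.sub_const _).pow_const 2)]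
  exact ES2 d

lemma EPexp (d : ℕ) : ∫ z, rexp (-z) ∂(chiSq d) = (√3)⁻¹ ^ d := by
  rw [integral_chiSq d (f := fun z => rexp (-z)) measurable_id'.neg.exp]
  exact E_expS d

lemma intPsqrt (d : ℕ) : Integrable (fun z => √z) (chiSq d) := by
  have h1 : Integrable (fun z : ℝ => 1 + |z|) (chiSq d) :=
    (integrable_const 1).add (intP1 d).abs
  refine h1.mono Real.continuous_sqrt.measurable.aestronglyMeasurable ?_
  filter_upwards [chiSq_ae_nonneg d] with z hz
  rw [Real.norm_eq_abs, Real.norm_eq_abs, abs_of_nonneg (Real.sqrt_nonneg z),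
    abs_of_nonneg (by positivity)]
  nlinarith [Real.sq_sqrt hz, sq_nonneg (√z - 1), le_abs_self z, Real.sqrt_nonneg z]

lemma tail_bound (d : ℕ) :
    ((chiSq d) {z : ℝ | z ≤ (d:ℝ)/4}).toReal ≤ rexp (-(d:ℝ)/16) := by
  have hmarkov := mul_meas_ge_le_integral_of_nonneg (μ := chiSq d) (f := fun z => rexp (-z))
    (Eventually.of_forall fun z => (Real.exp_pos _).le) (intPexp d) (rexp (-((d:ℝ)/4)))
  have hset : {x : ℝ | rexp (-((d:ℝ)/4)) ≤ rexp (-x)} = {z : ℝ | z ≤ (d:ℝ)/4} := by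
    ext z
    simp only [Set.mem_setOf_eq, Real.exp_le_exp, neg_le_neg_iff]
  rw [hset, EPexp] at hmarkov
  set m := ((chiSq d) {z : ℝ | z ≤ (d:ℝ)/4}).toReal with hm
  have hε : (0:ℝ) < rexp (-((d:ℝ)/4)) := Real.exp_pos _
  have hminv : (rexp (-((d:ℝ)/4)))⁻¹ = rexp ((d:ℝ)/4) := by
    rw [← Real.exp_neg, neg_neg]
  have hm_le : m ≤ rexp ((d:ℝ)/4) * (√3)⁻¹ ^ d := by
    have h' := mul_le_mul_of_nonneg_left hmarkov (inv_pos.mpr hε).le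
    rw [← mul_assoc, inv_mul_cancel₀ hε.ne', one_mul, hminv] at h'
    exact h'
  have hs3 : (0:ℝ) < (√3) ^ d := pow_pos (Real.sqrt_pos.mpr (by norm_num)) d
  have key : rexp ((d:ℝ)/4) * (√3)⁻¹ ^ d ≤ rexp (-(d:ℝ)/16) := by
    rw [inv_pow, mul_comm, inv_mul_le_iff₀ hs3]
    have h2 : rexp ((5:ℝ)/16) ≤ √3 := by
      rw [Real.le_sqrt (Real.exp_pos _).le (by norm_num)]
      have e1 : rexp ((5:ℝ)/16) ^ 2 = rexp ((5:ℝ)/8) := by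
        rw [← Real.exp_nat_mul]
        norm_num
      rw [e1]
      have h58 : rexp ((5:ℝ)/8) ≤ rexp 1 := Real.exp_le_exp.mpr (by norm_num)
      have h9 := Real.exp_one_lt_d9
      norm_num at h9 ⊢
      linarith
    calc rexp ((d:ℝ)/4) = rexp ((5:ℝ)/16) ^ d * rexp (-(d:ℝ)/16) := by
          rw [← Real.exp_nat_mul, ← Real.exp_add]
          congr 1
          push_cast
          ring
      _ ≤ (√3) ^ d * rexp (-(d:ℝ)/16) :=
          mul_le_mul_of_nonneg_right (pow_le_pow_left₀ (Real.exp_pos _).le h2 d)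
            (Real.exp_pos _).le
  exact hm_le.trans key

lemma pointwise_bound {D z : ℝ} (hD : 0 < D) (hz : 0 ≤ z) :
    √D + (z - D)/(2*√D) - (z - D)^2/(D*√D) - (if z ≤ D/4 then √D/16 else 0) ≤ √z := by
  have hr2 : (√D)^2 = D := Real.sq_sqrt hD.le
  have hrpos : 0 < √D := Real.sqrt_pos.mpr hD
  have hs0 : 0 ≤ √z := Real.sqrt_nonneg z
  have hs2 : (√z)^2 = z := Real.sq_sqrt hz
  set r := √D with hrdef
  set s := √z with hsdef
  have hzz : z = s^2 := hs2.symm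
  have hDD : D = r^2 := hr2.symm
  by_cases h : z ≤ D/4
  · rw [if_pos h]
    have hs_le : 2*s ≤ r := by nlinarith
    rw [← sub_nonneg]
    have hrepr : s - (r + (z - D)/(2*r) - (z - D)^2/(D*r) - r/16)
        = (2*r^3*s - (2*r^4 + (s^2-r^2)*r^2 - 2*(s^2-r^2)^2 - r^4/8)) / (2*r^3) := by
      rw [hzz, hDD]
      field_simp
      ring
    rw [hrepr]
    apply div_nonneg _ (by positivity)
    have hA : 4*s^2 ≤ r^2 := by nlinarith
    have hB : (3/4)*r^2 ≤ r^2 - s^2 := by nlinarith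
    have hBr : ((3/4)*r^2)*r^2 ≤ (r^2 - s^2)*r^2 :=
      mul_le_mul_of_nonneg_right hB (sq_nonneg r)
    have hC : ((3/4)*r^2)^2 ≤ (r^2 - s^2)^2 :=
      pow_le_pow_left₀ (by positivity) hB 2
    have hsr : 0 ≤ s * r^3 := mul_nonneg hs0 (by positivity)
    nlinarith [hB, hBr, hC, hsr]
  · rw [if_neg h]
    push_neg at h
    have hs_ge : r ≤ 2*s := by nlinarith
    rw [← sub_nonneg]
    have hrepr : s - (r + (z - D)/(2*r) - (z - D)^2/(D*r) - 0)
        = ((s-r)^2 * (2*(s+r)^2 - r^2)) / (2*r^3) := by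
      rw [hzz, hDD]
      field_simp
      ring
    rw [hrepr]
    apply div_nonneg _ (by positivity)
    apply mul_nonneg (sq_nonneg _)
    nlinarith [hs_ge, hrpos, hs0]

/-- If `Z ~ χ²(d)`, then `E[√Z] ≥ √d − √d · exp(−d/16) − √(π/2)`. -/
theorem chiSq_expectation_sqrt (d : ℕ) (hd : 0 < d) :
    Real.sqrt d - Real.sqrt d * Real.exp (-(d : ℝ) / 16) - Real.sqrt (Real.pi / 2) ≤
      ∫ y, Real.sqrt y ∂(chiSq d) := by
  have hsqint : 0 ≤ ∫ y, √y ∂(chiSq d) := integral_nonneg fun y => Real.sqrt_nonneg y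
  set D := (d:ℝ) with hDdef
  have hD : 0 < D := by rw [hDdef]; exact_mod_cast hd
  have hsD : 0 ≤ √D := Real.sqrt_nonneg D
  have hpi3 := Real.pi_gt_three
  by_cases hd2 : d ≤ 2
  · -- small d : right-hand side is nonpositive
    refine le_trans ?_ hsqint
    have hDle : D ≤ 2 := by rw [hDdef]; exact_mod_cast hd2
    have h1 : 1 - rexp (-D/16) ≤ D/16 := by
      have h := Real.add_one_le_exp (-(D/16))
      have e : -D/16 = -(D/16) := by ring
      rw [e]
      linarith
    have h4 : rexp (-D/16) ≤ 1 := Real.exp_le_one_iff.mpr (by linarith)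
    have h2 : √D ≤ 2 := by
      have : √D ≤ √4 := Real.sqrt_le_sqrt (by linarith)
      rwa [show (4:ℝ) = 2^2 by norm_num, Real.sqrt_sq (by norm_num)] at this
    have h3 : (1:ℝ) ≤ √(π/2) := by
      rw [show (1:ℝ) = √1 from Real.sqrt_one.symm]
      exact Real.sqrt_le_sqrt (by linarith)
    have hmul : √D * (1 - rexp (-D/16)) ≤ 2 * (D/16) :=
      mul_le_mul h2 h1 (by linarith) (by norm_num)
    nlinarith [hmul, hDle, h3, hsD, h4]
  · -- main case : d ≥ 3
    push_neg at hd2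
    have h3d : (3:ℝ) ≤ D := by rw [hDdef]; exact_mod_cast hd2
    set P := chiSq d with hPdef
    set r := √D with hrdef
    have hr2 : r^2 = D := Real.sq_sqrt hD.le
    have hrpos : 0 < r := Real.sqrt_pos.mpr hD
    set A := Set.Iic (D/4) with hAdef
    have hAmeas : MeasurableSet A := measurableSet_Iic
    -- integrable pieces
    have t1 : Integrable (fun z => r + (z - D)/(2*r)) P :=
      (integrable_const r).add (((intP1 d).sub (integrable_const D)).div_const _)
    have t2 : Integrable (fun z => (z - D)^2/(D*r)) P := (intP2 d).div_const _
    have t3 : Integrable (A.indicator fun _ => r/16) P :=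
      (integrable_const (r/16)).indicator hAmeas
    have intphi : Integrable
        (fun z => r + (z - D)/(2*r) - (z - D)^2/(D*r) - A.indicator (fun _ => r/16) z) P :=
      (t1.sub t2).sub t3
    -- pointwise bound a.e.
    have hphile : (fun z => r + (z - D)/(2*r) - (z - D)^2/(D*r)
        - A.indicator (fun _ => r/16) z) ≤ᵐ[P] fun z => √z := by
      filter_upwards [chiSq_ae_nonneg d] with z hz
      have hpb := pointwise_bound hD hz
      have hind : A.indicator (fun _ => r/16) z = if z ≤ D/4 then r/16 else 0 := by
        rw [Set.indicator_apply]
        simp [hAdef, Set.mem_Iic]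
      simp only [hind]
      exact hpb
    have key := integral_mono_ae intphi (intPsqrt d) hphile
    -- compute the integral of the lower bound
    have e1 : ∫ z, (r + (z - D)/(2*r)) ∂P = r := by
      rw [integral_add (f := fun _ => r) (g := fun z => (z - D)/(2*r)) (integrable_const r)
        (((intP1 d).sub (integrable_const D)).div_const _), integral_const]
      have : ∫ z, (z - D)/(2*r) ∂P = (∫ z, (z - D) ∂P) / (2*r) := integral_div _ _
      rw [this, integral_sub (f := fun z => z) (g := fun _ => D) (intP1 d) (integrable_const D),
        EP1 d, integral_const]
      simp [hDdef]
    have e2 : ∫ z, (z - D)^2/(D*r) ∂P = 2/r := by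
      have : ∫ z, (z - D)^2/(D*r) ∂P = (∫ z, (z - D)^2 ∂P) / (D*r) := integral_div _ _
      rw [this, EP2 d]
      field_simp
      ring
    have e3 : ∫ z, A.indicator (fun _ => r/16) z ∂P = (P A).toReal * (r/16) := by
      rw [integral_indicator_const _ hAmeas]
      simp [smul_eq_mul, Measure.real_def]
    have ephi : ∫ z, (r + (z - D)/(2*r) - (z - D)^2/(D*r)
        - A.indicator (fun _ => r/16) z) ∂P
        = r - 2/r - (P A).toReal * (r/16) := by
      rw [integral_sub (f := fun z => r + (z - D)/(2*r) - (z - D)^2/(D*r))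
        (g := A.indicator fun _ => r/16) (t1.sub t2) t3,
        integral_sub (f := fun z => r + (z - D)/(2*r)) (g := fun z => (z - D)^2/(D*r)) t1 t2,
        e1, e2, e3]
    rw [ephi] at key
    -- tail bound
    have htail : (P A).toReal ≤ rexp (-D/16) := tail_bound d
    have hmA : 0 ≤ (P A).toReal := ENNReal.toReal_nonneg
    have hexp0 : (0:ℝ) ≤ rexp (-D/16) := (Real.exp_pos _).le
    -- 2/r ≤ √(π/2)
    have hr3 : √3 ≤ r := Real.sqrt_le_sqrt h3d
    have hs3pos : (0:ℝ) < √3 := Real.sqrt_pos.mpr (by norm_num)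
    have hfrac : 2/r ≤ 2/√3 := by
      apply div_le_div_of_nonneg_left (by norm_num) hs3pos hr3
    have hfrac2 : 2/√3 ≤ √(π/2) := by
      rw [Real.le_sqrt (by positivity) (by positivity)]
      rw [div_pow, Real.sq_sqrt (by norm_num : (0:ℝ) ≤ 3)]
      norm_num
      linarith
    have hind_bd : (P A).toReal * (r/16) ≤ rexp (-D/16) * r := by
      have h1 : (P A).toReal * (r/16) ≤ rexp (-D/16) * (r/16) :=
        mul_le_mul_of_nonneg_right htail (by positivity)
      have h2 : rexp (-D/16) * (r/16) ≤ rexp (-D/16) * r :=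
        mul_le_mul_of_nonneg_left (by linarith) hexp0
      linarith
    have hgoal : r - r * rexp (-D/16) - √(π/2) ≤ r - 2/r - (P A).toReal * (r/16) := by
      have : 2/r ≤ √(π/2) := le_trans hfrac hfrac2
      nlinarith [hind_bd]
    calc √D - √D * rexp (-D/16) - √(π/2)
        = r - r * rexp (-D/16) - √(π/2) := by rw [hrdef]
      _ ≤ r - 2/r - (P A).toReal * (r/16) := hgoal
      _ ≤ ∫ z, √z ∂P := key
end

section
/- Let p ≥ 1 be an odd integer and ω > 0. The p×p symmetric circulant matrix Ψ with entries Ψ[i,j] = exp(−ω·|i−j|_p), where |i−j|_p := min(|i−j|, p−|i−j|) is the toroidal distance, is positive semidefinite. -/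
open Finset


lemma torMod_helper (p u t : ℕ) (hu : u < p) (ht : t < p) :
    (u + t) % p = if u + t < p then u + t else u + t - p := by
  split_ifs with h
  · exact Nat.mod_eq_of_lt h
  · rw [Nat.mod_eq_sub_mod (by omega)]
    exact Nat.mod_eq_of_lt (by omega)

lemma torCount (m t : ℕ) (ht : t < 2*m+1) :
    (((Finset.range (2*m+1)).filter
      (fun u => ¬((u < m) ↔ ((u + t) % (2*m+1) < m)))).card : ℕ)
      = 2 * min t (2*m+1 - t) := by
  set p := 2*m+1 with hp
  rcases le_or_gt t m with h | h
  · have hset : (Finset.range p).filter (fun u => ¬((u < m) ↔ ((u + t) % p < m)))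
        = Finset.Ico (m - t) m ∪ Finset.Ico (p - t) p := by
      ext u
      simp only [Finset.mem_filter, Finset.mem_range, Finset.mem_union, Finset.mem_Ico]
      constructor
      · rintro ⟨hu, hP⟩
        rw [torMod_helper p u t hu (by omega)] at hP
        split_ifs at hP <;> omega
      · intro hmem
        have hu : u < p := by omega
        refine ⟨hu, ?_⟩
        rw [torMod_helper p u t hu (by omega)]
        split_ifs <;> omega
    rw [hset, Finset.card_union_of_disjoint, Nat.card_Ico, Nat.card_Ico]
    · omega
    · rw [Finset.disjoint_left]
      intro a ha hb
      simp only [Finset.mem_Ico] at ha hb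
      omega
  · have hset : (Finset.range p).filter (fun u => ¬((u < m) ↔ ((u + t) % p < m)))
        = Finset.Ico 0 (p - t) ∪ Finset.Ico m (m + (p - t)) := by
      ext u
      simp only [Finset.mem_filter, Finset.mem_range, Finset.mem_union, Finset.mem_Ico]
      constructor
      · rintro ⟨hu, hP⟩
        rw [torMod_helper p u t hu (by omega)] at hP
        split_ifs at hP <;> omega
      · intro hmem
        have hu : u < p := by omega
        refine ⟨hu, ?_⟩
        rw [torMod_helper p u t hu (by omega)]
        split_ifs <;> omega
    rw [hset, Finset.card_union_of_disjoint, Nat.card_Ico, Nat.card_Ico]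
    · omega
    · rw [Finset.disjoint_left]
      intro a ha hb
      simp only [Finset.mem_Ico] at ha hb
      omega

lemma torReindex (p c : ℕ) (hp : 0 < p) (R : ℕ → Prop) [DecidablePred R] :
    ((Finset.range p).filter (fun k => R ((k + c) % p))).card
      = ((Finset.range p).filter R).card := by
  have hadd : ∀ a b : ℕ, (a + b) % p = (a + b % p) % p :=
    fun a b => (Nat.add_mod_mod a b p).symm
  have hc1 : ((p - c % p) + c) % p = 0 := by
    rw [hadd, Nat.sub_add_cancel (Nat.mod_lt c hp).le, Nat.mod_self]
  have hc2 : (c + (p - c % p)) % p = 0 := by rw [add_comm]; exact hc1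
  have key1 : ∀ a : ℕ, ((a + (p - c % p)) % p + c) % p = a % p := by
    intro a
    rw [Nat.mod_add_mod, add_assoc, hadd, hc1, add_zero]
  have key2 : ∀ a : ℕ, ((a + c) % p + (p - c % p)) % p = a % p := by
    intro a
    rw [Nat.mod_add_mod, add_assoc, hadd, hc2, add_zero]
  refine Finset.card_bij' (fun k _ => (k + c) % p)
    (fun u _ => (u + (p - c % p)) % p) ?_ ?_ ?_ ?_
  · intro k hk
    simp only [Finset.mem_filter, Finset.mem_range] at hk ⊢
    exact ⟨Nat.mod_lt _ hp, hk.2⟩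
  · intro u hu
    simp only [Finset.mem_filter, Finset.mem_range] at hu ⊢
    refine ⟨Nat.mod_lt _ hp, ?_⟩
    rw [key1, Nat.mod_eq_of_lt hu.1]
    exact hu.2
  · intro k hk
    simp only [Finset.mem_filter, Finset.mem_range] at hk
    try dsimp only
    rw [key2, Nat.mod_eq_of_lt hk.1]
  · intro u hu
    simp only [Finset.mem_filter, Finset.mem_range] at hu
    try dsimp only
    rw [key1, Nat.mod_eq_of_lt hu.1]

/-- The toroidal distance `|i−j|_p := min(|i−j|, p−|i−j|)` on the discrete torus with `p`
points. -/
def toroidalDist {p : ℕ} (i j : Fin p) : ℕ :=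
  min ((i : ℤ) - (j : ℤ)).natAbs (p - ((i : ℤ) - (j : ℤ)).natAbs)

lemma torMain (m : ℕ) (i j : Fin (2*m+1)) :
    ((Finset.univ.filter (fun k : Fin (2*m+1) =>
      ¬((((k : ℕ) + (2*m+1 - (i : ℕ))) % (2*m+1) < m) ↔
        (((k : ℕ) + (2*m+1 - (j : ℕ))) % (2*m+1) < m)))).card : ℕ)
      = 2 * toroidalDist i j := by
  have hp : 0 < 2*m+1 := by omega
  have hi : (i : ℕ) < 2*m+1 := i.isLt
  have hj : (j : ℕ) < 2*m+1 := j.isLt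
  have ht : ((i : ℕ) + (2*m+1 - (j : ℕ))) % (2*m+1) < 2*m+1 := Nat.mod_lt _ hp
  -- step 1 : convert the Fin filter card to a range filter card
  have step1 : ((Finset.univ.filter (fun k : Fin (2*m+1) =>
      ¬((((k : ℕ) + (2*m+1 - (i : ℕ))) % (2*m+1) < m) ↔
        (((k : ℕ) + (2*m+1 - (j : ℕ))) % (2*m+1) < m)))).card : ℕ)
      = (((Finset.range (2*m+1)).filter (fun k : ℕ =>
      ¬(((k + (2*m+1 - (i : ℕ))) % (2*m+1) < m) ↔
        ((k + (2*m+1 - (j : ℕ))) % (2*m+1) < m)))).card : ℕ) := by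
    rw [Finset.card_filter, Finset.card_filter, Fin.sum_univ_eq_sum_range
      (fun k : ℕ => if ¬(((k + (2*m+1 - (i : ℕ))) % (2*m+1) < m) ↔
        ((k + (2*m+1 - (j : ℕ))) % (2*m+1) < m)) then 1 else 0)]
  rw [step1]
  -- step 2 : rewrite the predicate into shifted form
  have step2 : ∀ k ∈ Finset.range (2*m+1),
      (¬(((k + (2*m+1 - (i : ℕ))) % (2*m+1) < m) ↔
         ((k + (2*m+1 - (j : ℕ))) % (2*m+1) < m)))
      ↔ (¬((((k + (2*m+1 - (i : ℕ))) % (2*m+1)) < m) ↔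
          ((((k + (2*m+1 - (i : ℕ))) % (2*m+1))
             + ((i : ℕ) + (2*m+1 - (j : ℕ))) % (2*m+1)) % (2*m+1) < m))) := by
    intro k _
    have harith : k + (2*m+1 - (i : ℕ)) + ((i : ℕ) + (2*m+1 - (j : ℕ)))
        = (k + (2*m+1 - (j : ℕ))) + (2*m+1) := by omega
    have hmods : (((k + (2*m+1 - (i : ℕ))) % (2*m+1))
        + ((i : ℕ) + (2*m+1 - (j : ℕ))) % (2*m+1)) % (2*m+1)
        = (k + (2*m+1 - (j : ℕ))) % (2*m+1) := by
      rw [Nat.add_mod_mod, Nat.mod_add_mod, harith, Nat.add_mod_right]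
    rw [hmods]
  rw [Finset.filter_congr step2]
  rw [torReindex (2*m+1) (2*m+1 - (i : ℕ)) hp
    (fun u => ¬((u < m) ↔ ((u + ((i : ℕ) + (2*m+1 - (j : ℕ))) % (2*m+1)) % (2*m+1) < m)))]
  rw [torCount m (((i : ℕ) + (2*m+1 - (j : ℕ))) % (2*m+1)) ht]
  -- step 3 : identify min t (p - t) with toroidalDist
  have htval : ((i : ℕ) + (2*m+1 - (j : ℕ))) % (2*m+1)
      = if (j : ℕ) ≤ (i : ℕ) then (i : ℕ) - (j : ℕ)
        else 2*m+1 - ((j : ℕ) - (i : ℕ)) := by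
    split_ifs with h
    · rw [show (i : ℕ) + (2*m+1 - (j : ℕ)) = (2*m+1) + ((i : ℕ) - (j : ℕ)) by omega,
        Nat.add_mod_left, Nat.mod_eq_of_lt (by omega)]
    · rw [Nat.mod_eq_of_lt (show (i : ℕ) + (2*m+1 - (j : ℕ)) < 2*m+1 from by omega)]
      omega
  have hd : toroidalDist i j
      = min (((i : ℤ) - (j : ℤ)).natAbs) (2*m+1 - ((i : ℤ) - (j : ℤ)).natAbs) := by
    simp [toroidalDist]
  have hcast : ((i : ℤ)) = ((i : ℕ) : ℤ) := rfl
  have hcast2 : ((j : ℤ)) = ((j : ℕ) : ℤ) := rfl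
  rw [hd, htval, hcast, hcast2]
  split_ifs with h <;> omega

/-- For odd `p ≥ 1` and `ω > 0`, the `p × p` symmetric circulant matrix with entries
`exp(−ω·|i−j|_p)`, where `|i−j|_p` is the toroidal distance, is positive semidefinite. -/
theorem posSemidef_exponential_toroidal (p : ℕ) (hp : 1 ≤ p) (hodd : Odd p)
    (ω : ℝ) (hω : 0 < ω) :
    (Matrix.of fun i j : Fin p =>
      Real.exp (-ω * (toroidalDist i j : ℝ))).PosSemidef := by
  obtain ⟨m, hm⟩ := hodd
  subst hm
  set s : ℝ := Real.exp (-(ω/2)) with hsdef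
  have hs0 : 0 < s := Real.exp_pos _
  have hs1 : s < 1 := by
    rw [hsdef, ← Real.exp_zero]
    apply Real.exp_lt_exp.mpr
    linarith
  set α : ℝ := Real.sqrt ((1+s)/2) with hαdef
  set β : ℝ := Real.sqrt ((1-s)/2) with hβdef
  set w : Bool → Fin 2 → ℝ :=
    (fun x e => if e = 0 then α else (if x then β else -β)) with hwdef
  have hα : α * α = (1+s)/2 := Real.mul_self_sqrt (by linarith)
  have hβ : β * β = (1-s)/2 := Real.mul_self_sqrt (by linarith)
  have hw : ∀ x y : Bool, (∑ e : Fin 2, w x e * w y e) = if x = y then 1 else s := by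
    intro x y
    cases x <;> cases y <;>
      simp [hwdef, Fin.sum_univ_two] <;> nlinarith [hα, hβ]
  set b : Fin (2*m+1) → Fin (2*m+1) → Bool :=
    (fun i k => decide (((k : ℕ) + (2*m+1 - (i : ℕ))) % (2*m+1) < m)) with hbdef
  have entry : ∀ i j : Fin (2*m+1),
      Real.exp (-ω * (toroidalDist i j : ℝ))
        = ∏ k : Fin (2*m+1), (if b i k = b j k then (1:ℝ) else s) := by
    intro i j
    rw [Finset.prod_ite (fun _ => (1:ℝ)) (fun _ => s), Finset.prod_const_one,
      Finset.prod_const, one_mul]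
    have hpred : ∀ k : Fin (2*m+1),
        (¬ b i k = b j k) ↔
        ¬((((k : ℕ) + (2*m+1 - (i : ℕ))) % (2*m+1) < m) ↔
          (((k : ℕ) + (2*m+1 - (j : ℕ))) % (2*m+1) < m)) := by
      intro k
      rw [hbdef]
      simp only [decide_eq_decide]
    have hcard : (Finset.univ.filter (fun k => ¬ b i k = b j k)).card
        = 2 * toroidalDist i j := by
      rw [Finset.filter_congr (fun k _ => hpred k)]
      exact torMain m i j
    rw [hcard, hsdef, ← Real.exp_nat_mul]
    congr 1
    push_cast
    ring
  set G : Fin (2*m+1) → (Fin (2*m+1) → Fin 2) → ℝ :=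
    (fun i ε => ∏ k, w (b i k) (ε k)) with hGdef
  have gram : ∀ i j : Fin (2*m+1),
      Real.exp (-ω * (toroidalDist i j : ℝ))
        = ∑ ε : Fin (2*m+1) → Fin 2, G i ε * G j ε := by
    intro i j
    rw [entry i j]
    rw [Finset.prod_congr rfl (fun k _ => (hw (b i k) (b j k)).symm)]
    rw [Finset.prod_univ_sum, Fintype.piFinset_univ]
    exact Finset.sum_congr rfl fun ε _ => by
      rw [hGdef]
      exact Finset.prod_mul_distrib
  set A : Matrix (Fin (2*m+1) → Fin 2) (Fin (2*m+1)) ℝ :=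
    Matrix.of (fun ε i => G i ε) with hAdef
  have hmat : (Matrix.of fun i j : Fin (2*m+1) =>
      Real.exp (-ω * (toroidalDist i j : ℝ))) = A.conjTranspose * A := by
    ext i j
    simp only [Matrix.mul_apply, Matrix.conjTranspose_apply, Matrix.of_apply,
      hAdef, star_trivial]
    exact gram i j
  rw [hmat]
  exact Matrix.posSemidef_conjTranspose_mul_self A
end

section
/- Let p ≥ 1 be an odd integer and t > 0. The p×p symmetric circulant matrix Ψ with entries Ψ[i,j] = (1 + |i−j|_p)^{−t}, where |i−j|_p := min(|i−j|, p−|i−j|), is positive semidefinite. -/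
lemma tor_mod_eq (x p : ℕ) (hp : 0 < p) (hx : x < 2 * p) :
    x % p = if x < p then x else x - p := by
  split_ifs with h
  · exact Nat.mod_eq_of_lt h
  · rw [Nat.mod_eq_sub_mod (by omega)]
    exact Nat.mod_eq_of_lt (by omega)

lemma tor_filter_count (m a : ℕ) (ha : a < 2 * m + 1) :
    ((Finset.range (2 * m + 1)).filter
      (fun u => ¬(((u + a) % (2 * m + 1) < m) ↔ (u < m)))).card
      = 2 * min a (2 * m + 1 - a) := by
  set p := 2 * m + 1 with hp
  have hp0 : 0 < p := by omega
  have key : ∀ u, u < p → ((u + a) % p = if u + a < p then u + a else u + a - p) :=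
    fun u hu => tor_mod_eq _ _ hp0 (by omega)
  rcases le_or_gt a m with h | h
  · have heq : (Finset.range p).filter
        (fun u => ¬(((u + a) % p < m) ↔ (u < m)))
        = Finset.Ico (m - a) m ∪ Finset.Ico (p - a) p := by
      ext u
      simp only [Finset.mem_filter, Finset.mem_range, Finset.mem_union, Finset.mem_Ico]
      constructor
      · rintro ⟨hu, hc⟩
        rw [key u hu] at hc
        split_ifs at hc with h1 <;> omega
      · intro hu
        have hu' : u < p := by omega
        refine ⟨hu', ?_⟩
        rw [key u hu']
        split_ifs with h1 <;> omega
    rw [heq, Finset.card_union_of_disjoint, Nat.card_Ico, Nat.card_Ico]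
    · omega
    · rw [Finset.disjoint_left]
      intro u hu1 hu2
      simp only [Finset.mem_Ico] at hu1 hu2
      omega
  · have heq : (Finset.range p).filter
        (fun u => ¬(((u + a) % p < m) ↔ (u < m)))
        = Finset.Ico 0 (p - a) ∪ Finset.Ico m (m + (p - a)) := by
      ext u
      simp only [Finset.mem_filter, Finset.mem_range, Finset.mem_union, Finset.mem_Ico]
      constructor
      · rintro ⟨hu, hc⟩
        rw [key u hu] at hc
        split_ifs at hc with h1 <;> omega
      · intro hu
        have hu' : u < p := by omega
        refine ⟨hu', ?_⟩
        rw [key u hu']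
        split_ifs with h1 <;> omega
    rw [heq, Finset.card_union_of_disjoint, Nat.card_Ico, Nat.card_Ico]
    · omega
    · rw [Finset.disjoint_left]
      intro u hu1 hu2
      simp only [Finset.mem_Ico] at hu1 hu2
      omega

lemma tor_mismatch_card (p m : ℕ) [NeZero p] (hpm : p = 2 * m + 1) (i j : Fin p) :
    (Finset.univ.filter (fun k : ZMod p =>
        ¬(((((i : ℕ) : ZMod p) - k).val < m) ↔ ((((j : ℕ) : ZMod p) - k).val < m)))).card
      = 2 * toroidalDist i j := by
  have hp0 : 0 < p := Nat.pos_of_ne_zero (NeZero.ne p)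
  set i' : ZMod p := ((i : ℕ) : ZMod p) with hi'
  set j' : ZMod p := ((j : ℕ) : ZMod p) with hj'
  set a : ℕ := (i' - j').val with haa
  have halt : a < p := ZMod.val_lt _
  have hsub : i' - j' = (((i : ℕ) + p - (j : ℕ) : ℕ) : ZMod p) := by
    have h1 : ((i : ℕ) + p : ℕ) = ((i : ℕ) + p - (j : ℕ)) + (j : ℕ) := by
      have := j.isLt; omega
    have h2 : (((i : ℕ) + p - (j : ℕ) : ℕ) : ZMod p) + j' = i' + ((p : ℕ) : ZMod p) := by
      rw [hi', hj', ← Nat.cast_add, ← h1, Nat.cast_add]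
    rw [ZMod.natCast_self, add_zero] at h2
    rw [← h2, add_sub_cancel_right]
  have ha : a = ((i : ℕ) + p - (j : ℕ)) % p := by rw [haa, hsub, ZMod.val_natCast]
  have hmin : min a (p - a) = toroidalDist i j := by
    have hi2 := i.isLt
    have hj2 := j.isLt
    rw [ha, tor_mod_eq _ _ hp0 (by omega)]
    unfold toroidalDist
    split_ifs with h1 <;> omega
  have hcond : ∀ k : ZMod p, (i' - k).val = ((j' - k).val + a) % p := by
    intro k
    have h : i' - k = (j' - k) + (i' - j') := by ring
    rw [h, ZMod.val_add]
  have hbij : (Finset.univ.filter (fun k : ZMod p =>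
        ¬(((i' - k).val < m) ↔ ((j' - k).val < m)))).card
      = ((Finset.range p).filter
        (fun u => ¬(((u + a) % p < m) ↔ (u < m)))).card := by
    apply Finset.card_nbij (fun k => (j' - k).val)
    · intro k hk
      simp only [Finset.coe_filter, Set.mem_setOf_eq, Finset.mem_filter, Finset.mem_univ, true_and] at hk
      simp only [Finset.coe_filter, Set.mem_setOf_eq, Finset.mem_filter, Finset.mem_range]
      refine ⟨ZMod.val_lt _, ?_⟩
      rw [← hcond k]
      exact hk
    · intro k1 _ k2 _ hk
      have : j' - k1 = j' - k2 := ZMod.val_injective p hk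
      exact sub_right_injective this
    · intro u hu
      simp only [Finset.coe_filter, Finset.mem_range, Set.mem_setOf_eq] at hu
      obtain ⟨hu1, hu2⟩ := hu
      refine ⟨j' - (u : ZMod p), ?_, ?_⟩
      · have hval : (j' - (j' - (u : ZMod p))).val = u := by
          rw [sub_sub_cancel, ZMod.val_natCast, Nat.mod_eq_of_lt hu1]
        simp only [Finset.coe_filter, Finset.mem_univ, Set.mem_setOf_eq, true_and]
        rw [hcond, hval]
        exact hu2
      · show (j' - (j' - (u : ZMod p))).val = u
        rw [sub_sub_cancel, ZMod.val_natCast, Nat.mod_eq_of_lt hu1]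
  rw [hbij, ← hmin]
  rw [hpm] at halt ⊢
  exact tor_filter_count m a halt

open Matrix in

lemma tor_gram_psd {n ι : Type*} [Fintype n] [Fintype ι] (Φ : ι → n → ℝ) :
    Matrix.PosSemidef (Matrix.of fun i j : n => ∑ s : ι, Φ s i * Φ s j) := by
  have h : (Matrix.of fun i j : n => ∑ s : ι, Φ s i * Φ s j)
      = (Matrix.of fun (s : ι) (i : n) => Φ s i)ᴴ * (Matrix.of fun (s : ι) (i : n) => Φ s i) := by
    ext i j
    simp [Matrix.mul_apply, Matrix.conjTranspose_apply]
  rw [h]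
  exact Matrix.posSemidef_conjTranspose_mul_self _

lemma tor_pow_mismatch_psd {n ι : Type*} [Fintype n] [Fintype ι] [DecidableEq ι]
    (χ : n → ι → Bool) (c : ℝ) (hc0 : 0 ≤ c) (hc1 : c ≤ 1) :
    Matrix.PosSemidef (Matrix.of fun i j : n =>
      c ^ (Finset.univ.filter (fun k : ι => χ i k ≠ χ j k)).card) := by
  set ψ : Bool → Fin 2 → ℝ := fun b => if b then ![c, Real.sqrt (1 - c ^ 2)] else ![1, 0]
    with hψdef
  have hsq : Real.sqrt (1 - c ^ 2) * Real.sqrt (1 - c ^ 2) = 1 - c ^ 2 :=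
    Real.mul_self_sqrt (by nlinarith)
  have hψ : ∀ x y : Bool, (∑ e : Fin 2, ψ x e * ψ y e) = if x = y then 1 else c := by
    intro x y
    cases x <;> cases y <;> simp [hψdef, Fin.sum_univ_two] <;> nlinarith [hsq]
  have key : ∀ i j : n, (c ^ (Finset.univ.filter (fun k : ι => χ i k ≠ χ j k)).card)
      = ∑ g : ι → Fin 2, (∏ k : ι, ψ (χ i k) (g k)) * (∏ k : ι, ψ (χ j k) (g k)) := by
    intro i j
    have h1 : ∀ g : ι → Fin 2, (∏ k : ι, ψ (χ i k) (g k)) * (∏ k : ι, ψ (χ j k) (g k))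
        = ∏ k : ι, (ψ (χ i k) (g k) * ψ (χ j k) (g k)) :=
      fun g => (Finset.prod_mul_distrib).symm
    simp_rw [h1]
    rw [show (Finset.univ : Finset (ι → Fin 2))
        = Fintype.piFinset (fun _ => (Finset.univ : Finset (Fin 2))) from
        (Fintype.piFinset_univ).symm]
    have hps := Finset.prod_univ_sum (fun _ : ι => (Finset.univ : Finset (Fin 2)))
      (fun k e => ψ (χ i k) e * ψ (χ j k) e)
    rw [← hps]
    rw [Finset.prod_congr rfl (fun k _ => hψ (χ i k) (χ j k))]
    rw [Finset.prod_ite]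
    simp [Finset.prod_const, ne_eq]
  have h2 : (Matrix.of fun i j : n =>
        c ^ (Finset.univ.filter (fun k : ι => χ i k ≠ χ j k)).card)
      = Matrix.of fun i j : n => ∑ g : ι → Fin 2,
          (fun g (i : n) => ∏ k : ι, ψ (χ i k) (g k)) g i
          * (fun g (i : n) => ∏ k : ι, ψ (χ i k) (g k)) g j := by
    ext i j
    simpa using key i j
  rw [h2]
  exact tor_gram_psd _

open MeasureTheory Matrix in
lemma tor_exp_psd (p m : ℕ) [NeZero p] (hpm : p = 2 * m + 1) (s : ℝ) (hs : 0 ≤ s) :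
    Matrix.PosSemidef (Matrix.of fun i j : Fin p =>
      Real.exp (-(s * (toroidalDist i j : ℝ)))) := by
  set c : ℝ := Real.exp (-(s / 2)) with hc
  have hc0 : 0 ≤ c := (Real.exp_pos _).le
  have hc1 : c ≤ 1 := Real.exp_le_one_iff.mpr (by linarith)
  set χ : Fin p → ZMod p → Bool := fun i k => decide ((((i : ℕ) : ZMod p) - k).val < m)
    with hχ
  have hEq : (Matrix.of fun i j : Fin p => Real.exp (-(s * (toroidalDist i j : ℝ))))
      = Matrix.of fun i j : Fin p =>
          c ^ (Finset.univ.filter (fun k : ZMod p => χ i k ≠ χ j k)).card := by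
    ext i j
    simp only [Matrix.of_apply]
    have hfeq : (Finset.univ.filter (fun k : ZMod p => χ i k ≠ χ j k))
        = (Finset.univ.filter (fun k : ZMod p =>
            ¬(((((i : ℕ) : ZMod p) - k).val < m) ↔ ((((j : ℕ) : ZMod p) - k).val < m)))) := by
      ext k
      simp [hχ, decide_eq_decide]
    rw [hfeq, tor_mismatch_card p m hpm i j, hc, ← Real.exp_nat_mul]
    congr 1
    push_cast
    ring
  rw [hEq]
  exact tor_pow_mismatch_psd χ c hc0 hc1

open MeasureTheory Matrix in
/-- For odd `p ≥ 1` and `t > 0`, the `p × p` symmetric circulant matrix with entries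
`(1 + |i−j|_p)^{−t}`, where `|i−j|_p` is the toroidal distance, is positive semidefinite. -/
theorem posSemidef_polynomial_toroidal (p : ℕ) (hp : 1 ≤ p) (hodd : Odd p)
    (t : ℝ) (ht : 0 < t) :
    (Matrix.of fun i j : Fin p =>
      (1 + (toroidalDist i j : ℝ)) ^ (-t)).PosSemidef := by
  haveI : NeZero p := ⟨by omega⟩
  obtain ⟨m, hm⟩ := hodd
  have hpm : p = 2 * m + 1 := by omega
  have hGamma : 0 < Real.Gamma t := Real.Gamma_pos_of_pos ht
  have hrep : ∀ b : ℝ, 1 ≤ b → b ^ (-t)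
      = (Real.Gamma t)⁻¹ * ∫ s in Set.Ioi (0:ℝ), s ^ (t - 1) * Real.exp (-(b * s)) := by
    intro b hb
    rw [Real.integral_rpow_mul_exp_neg_mul_Ioi ht (by linarith)]
    rw [one_div, Real.inv_rpow (by linarith), ← Real.rpow_neg (by linarith)]
    field_simp
  have hint : ∀ b : ℝ, 1 ≤ b →
      IntegrableOn (fun s : ℝ => s ^ (t - 1) * Real.exp (-(b * s))) (Set.Ioi 0) := by
    intro b hb
    have h := integrableOn_rpow_mul_exp_neg_mul_rpow (s := t - 1) (p := 1) (b := b)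
      (by linarith) one_pos (by linarith)
    simpa [Real.rpow_one, neg_mul] using h
  have hsymm : ∀ i j : Fin p, toroidalDist i j = toroidalDist j i := by
    intro i j; unfold toroidalDist; omega
  rw [Matrix.posSemidef_iff_dotProduct_mulVec]
  constructor
  · ext i j
    simp only [Matrix.conjTranspose_apply, Matrix.of_apply, star_trivial]
    rw [hsymm j i]
  · intro x
    have hb : ∀ i j : Fin p, (1:ℝ) ≤ 1 + (toroidalDist i j : ℝ) := by
      intro i j
      have : (0:ℝ) ≤ (toroidalDist i j : ℝ) := Nat.cast_nonneg _
      linarith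
    set F : (Fin p × Fin p) → ℝ → ℝ := fun q s =>
      (s ^ (t - 1) * Real.exp (-((1 + (toroidalDist q.1 q.2 : ℝ)) * s))) * (x q.1 * x q.2)
      with hF
    have h1 : star x ⬝ᵥ ((Matrix.of fun i j : Fin p =>
          (1 + (toroidalDist i j : ℝ)) ^ (-t)) *ᵥ x)
        = ∑ q : Fin p × Fin p, x q.1 * ((1 + (toroidalDist q.1 q.2 : ℝ)) ^ (-t) * x q.2) := by
      rw [Fintype.sum_prod_type]
      simp only [dotProduct, Matrix.mulVec, Matrix.of_apply, Pi.star_apply, star_trivial]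
      exact Finset.sum_congr rfl fun i _ => by rw [Finset.mul_sum]
    have h2 : ∀ q : Fin p × Fin p,
        x q.1 * ((1 + (toroidalDist q.1 q.2 : ℝ)) ^ (-t) * x q.2)
        = (Real.Gamma t)⁻¹ * ∫ s in Set.Ioi (0:ℝ), F q s := by
      intro q
      rw [hrep _ (hb q.1 q.2)]
      have : ∫ s in Set.Ioi (0:ℝ), F q s
          = (∫ s in Set.Ioi (0:ℝ),
              s ^ (t - 1) * Real.exp (-((1 + (toroidalDist q.1 q.2 : ℝ)) * s)))
            * (x q.1 * x q.2) := by
        rw [← MeasureTheory.integral_mul_const]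
      rw [this]
      ring
    rw [h1]
    rw [Finset.sum_congr rfl fun q _ => h2 q]
    rw [← Finset.mul_sum]
    rw [← MeasureTheory.integral_finset_sum _
      (fun q _ => ((hint _ (hb q.1 q.2)).mul_const _))]
    apply mul_nonneg (inv_nonneg.mpr hGamma.le)
    apply MeasureTheory.setIntegral_nonneg measurableSet_Ioi
    intro s hs
    have hs0 : 0 < s := hs
    have hpsd := (Matrix.posSemidef_iff_dotProduct_mulVec.mp (tor_exp_psd p m hpm s hs0.le)).2 x
    have hE : star x ⬝ᵥ ((Matrix.of fun i j : Fin p =>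
          Real.exp (-(s * (toroidalDist i j : ℝ)))) *ᵥ x)
        = ∑ q : Fin p × Fin p,
            Real.exp (-(s * (toroidalDist q.1 q.2 : ℝ))) * (x q.1 * x q.2) := by
      rw [Fintype.sum_prod_type]
      simp only [dotProduct, Matrix.mulVec, Matrix.of_apply, Pi.star_apply, star_trivial]
      refine Finset.sum_congr rfl fun i _ => ?_
      rw [Finset.mul_sum]
      exact Finset.sum_congr rfl fun j _ => by ring
    rw [hE] at hpsd
    have hsum : ∑ q : Fin p × Fin p, F q s
        = (s ^ (t - 1) * Real.exp (-s)) * ∑ q : Fin p × Fin p,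
            Real.exp (-(s * (toroidalDist q.1 q.2 : ℝ))) * (x q.1 * x q.2) := by
      rw [Finset.mul_sum]
      refine Finset.sum_congr rfl fun q _ => ?_
      have hexp : Real.exp (-((1 + (toroidalDist q.1 q.2 : ℝ)) * s))
          = Real.exp (-s) * Real.exp (-(s * (toroidalDist q.1 q.2 : ℝ))) := by
        rw [← Real.exp_add]
        ring_nf
      rw [hF]
      simp only []
      rw [hexp]
      ring
    rw [hsum]
    exact mul_nonneg (mul_nonneg (Real.rpow_nonneg hs0.le _) (Real.exp_nonneg _)) hpsd
end
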